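/- arXiv:1202.0172 — 3 statements merged into one kernel-verified Lean document; each statement's English description precedes it below -/
import Mathlib

section
/- Let x be the unique real root of 2x^3 - 4x^2 + 4x - 1 = 0, let c = x - 1 and b = (1 + c^2)/2. Then the reflection of the point P = (0,0) across the line f through (0,b) with direction (1,c) equals (1-x, 1), and the reflection of Q = (1/4, 0) across f equals (3/4, 1 - y) where y = x - x^2. -/
/-- For the snub-cube folding: with `x` the unique real root of `2x^3-4x^2+4x-1=0`,
`c = x - 1`, `b = (1+c^2)/2`, the reflection across the line through `(0,b)` with
direction `(1,c)` sends `P=(0,0)` to `(1-x,1)` and `Q=(1/4,0)` to `(3/4, 1-y)`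
where `y = x - x^2`. -/
theorem snub_cube_folding_reflection (x c b : ℝ) (R : ℝ × ℝ → ℝ × ℝ)
    (hx : 2 * x ^ 3 - 4 * x ^ 2 + 4 * x - 1 = 0)
    (hc : c = x - 1) (hb : b = (1 + c ^ 2) / 2)
    (hR : ∀ v : ℝ × ℝ,
      R v = ((1 / (1 + c ^ 2)) * ((1 - c ^ 2) * v.1 + 2 * c * (v.2 - b)),
             b + (1 / (1 + c ^ 2)) * (2 * c * v.1 + (c ^ 2 - 1) * (v.2 - b)))) :
    R (0, 0) = (1 - x, 1) ∧ R (1 / 4, 0) = (3 / 4, 1 - (x - x ^ 2)) := by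
  subst hc hb
  have hne : (1 : ℝ) + (x - 1) ^ 2 ≠ 0 := by positivity
  rw [hR, hR]
  refine ⟨Prod.ext ?_ ?_, Prod.ext ?_ ?_⟩ <;> simp only <;> field_simp <;> ring_nf <;>
    nlinarith [hx, sq_nonneg x, sq_nonneg (x-1)]
end

section
/- Let Φ = (1+√5)/2 and let x, y be real numbers satisfying y^2 = -Φx^2 + Φx - Φy + xy and (Φ-2)y^2 = (3-Φ)x^2 - 4x + 1 + (5-3Φ)xy + 2(Φ-1)y. If (4Φ-7)x + 1 - Φ ≠ 0 then y = ((4-2Φ)x^2 + (Φ-5)x + 1)/((4Φ-7)x + 1 - Φ), and moreover ((25Φ-41)x^3 + (30-17Φ)x^2 - 5x + Φ)·x = 0. -/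
/-- The two equilateral-triangle conditions for the snub dodecahedron vertices imply
the expression for `y` and the cubic equation for `x`. Here `Φ = (1+√5)/2`. -/
theorem snub_dodecahedron_equilateral_conditions (x y : ℝ)
    (h1 : y ^ 2 = -((1 + Real.sqrt 5) / 2) * x ^ 2 + ((1 + Real.sqrt 5) / 2) * x
        - ((1 + Real.sqrt 5) / 2) * y + x * y)
    (h2 : ((1 + Real.sqrt 5) / 2 - 2) * y ^ 2
        = (3 - (1 + Real.sqrt 5) / 2) * x ^ 2 - 4 * x + 1
          + (5 - 3 * ((1 + Real.sqrt 5) / 2)) * x * y + 2 * ((1 + Real.sqrt 5) / 2 - 1) * y)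
    (h3 : (4 * ((1 + Real.sqrt 5) / 2) - 7) * x + 1 - (1 + Real.sqrt 5) / 2 ≠ 0) :
    y = ((4 - 2 * ((1 + Real.sqrt 5) / 2)) * x ^ 2 + ((1 + Real.sqrt 5) / 2 - 5) * x + 1)
        / ((4 * ((1 + Real.sqrt 5) / 2) - 7) * x + 1 - (1 + Real.sqrt 5) / 2) ∧
    ((25 * ((1 + Real.sqrt 5) / 2) - 41) * x ^ 3 + (30 - 17 * ((1 + Real.sqrt 5) / 2)) * x ^ 2
      - 5 * x + (1 + Real.sqrt 5) / 2) * x = 0 := by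
  set Φ : ℝ := (1 + Real.sqrt 5) / 2 with hΦdef
  have h5 : Real.sqrt 5 ^ 2 = 5 := Real.sq_sqrt (by norm_num)
  have hΦ : Φ ^ 2 = Φ + 1 := by
    rw [hΦdef]; nlinarith [h5]
  have hlin : ((4 * Φ - 7) * x + 1 - Φ) * y
      = (4 - 2 * Φ) * x ^ 2 + (Φ - 5) * x + 1 := by
    linear_combination (x ^ 2 - x + y) * hΦ - (Φ - 2) * h1 + h2
  constructor
  · rw [eq_div_iff h3]
    linear_combination hlin
  · linear_combination
      (-(2 - Φ) * (((4 * Φ - 7) * x + 1 - Φ) ^ 2)) * h1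
      + ((2 - Φ) * ((4 - 2 * Φ) * x ^ 2 + (Φ - 5) * x + 1 + ((4 * Φ - 7) * x + 1 - Φ) * y
          + (Φ - x) * ((4 * Φ - 7) * x + 1 - Φ))) * hlin
      + (-2 + Φ + (22 - 14 * Φ + 2 * Φ ^ 2) * x + (-85 + 70 * Φ - 15 * Φ ^ 2) * x ^ 2
          + (128 - 130 * Φ + 32 * Φ ^ 2) * x ^ 3 + (-47 + 60 * Φ - 16 * Φ ^ 2) * x ^ 4) * hΦ
end

section
/- Let a, b, c > 0. In an equilateral triangle with each side divided into five parts of lengths proportional to a : b : c : b : a, the inner hexagon formed by the six division lines is regular if and only if c = b - 2a; assuming this, the hexagon side has length proportional to (b-a), and the conditions |UV| = √2·|TU| (regular octagon) force b = (√2+1)a, c = (√2-1)a, while |UV| = Φ·|TU| (regular decagon, Φ = (1+√5)/2) force b = (Φ+1)a, c = (Φ-1)a. -/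
/-- For an equilateral triangle whose sides are divided in ratios `a : b : c : b : a`
(side length proportional to `s = 2a + 2b + c`): the inner hexagon is regular iff
`|RQ| = 2|C'R|`, i.e. `(b+c)/s = 2(b-a)/s`, which holds iff `c = b - 2a`; its side is
proportional to `b - a`. Assuming this, the octagon condition `|UV| = √2·|TU|`, i.e.
`(b-a)/s = √2·a/s`, holds iff `b = (√2+1)a` and `c = (√2-1)a`, and the decagon
condition `|UV| = Φ·|TU|` holds iff `b = (Φ+1)a` and `c = (Φ-1)a`, `Φ = (1+√5)/2`. -/
theorem truncated_construction_ratios (a b c : ℝ) (ha : 0 < a) (hb : 0 < b) (hc : 0 < c) :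
    ((b + c) / (2 * a + 2 * b + c) = 2 * ((b - a) / (2 * a + 2 * b + c)) ↔ c = b - 2 * a) ∧
    (c = b - 2 * a →
      (((b - a) / (2 * a + 2 * b + c) = Real.sqrt 2 * (a / (2 * a + 2 * b + c))) ↔
        (b = (Real.sqrt 2 + 1) * a ∧ c = (Real.sqrt 2 - 1) * a)) ∧
      (((b - a) / (2 * a + 2 * b + c)
          = ((1 + Real.sqrt 5) / 2) * (a / (2 * a + 2 * b + c))) ↔
        (b = ((1 + Real.sqrt 5) / 2 + 1) * a ∧ c = ((1 + Real.sqrt 5) / 2 - 1) * a))) := by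
  have hs : (2 * a + 2 * b + c) ≠ 0 := by positivity
  constructor
  · rw [show (2:ℝ) * ((b - a) / (2 * a + 2 * b + c)) = 2 * (b - a) / (2 * a + 2 * b + c) from mul_div_assoc' 2 _ _, div_eq_div_iff hs hs]
    constructor <;> intro h <;> nlinarith [sq_nonneg (2 * a + 2 * b + c)]
  · intro hcab
    subst hcab
    have hs' : (2 * a + 2 * b + (b - 2 * a)) ≠ 0 := by
      have : 2 * a + 2 * b + (b - 2 * a) = 3 * b := by ring
      rw [this]; positivity
    have key : ∀ k : ℝ, ((b - a) / (2 * a + 2 * b + (b - 2 * a))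
        = k * (a / (2 * a + 2 * b + (b - 2 * a))) ↔ b - a = k * a) := by
      intro k
      rw [← mul_div_assoc, div_eq_div_iff hs' hs']
      constructor <;> intro h
      · have := mul_right_cancel₀ hs' h; linarith
      · rw [h]
    constructor
    · rw [key]
      constructor
      · intro h; constructor <;> linarith
      · rintro ⟨h1, _⟩; linarith
    · rw [key]
      constructor
      · intro h; constructor <;> linarith
      · rintro ⟨h1, _⟩; linarith
end
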